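/- Let Q be a finite quiver satisfying the exclusive condition. If the maximal length of a chain of cycles in Q is n, then the maximal length of a chain of cycles in the Kronecker square Q̂ is 2n − 1. -/

import Mathlib

structure Quiv where
  V : Type
  A : Type
  s : A → V
  t : A → V

namespace Quiv

/-- The Kronecker square of a quiver. -/
def kron (Q : Quiv) : Quiv where
  V := Q.V × Q.V
  A := Q.A × Q.A
  s := fun p => (Q.s p.1, Q.s p.2)
  t := fun p => (Q.t p.1, Q.t p.2)

instance toQuiver (Q : Quiv) : Quiver Q.V :=
  ⟨fun i j => {a : Q.A // Q.s a = i ∧ Q.t a = j}⟩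

/-- Paths of length `k` from `i` to `j`. -/
def PathN (Q : Quiv) (i j : Q.V) (k : ℕ) : Type :=
  {p : Quiver.Path i j // p.length = k}

end Quiv

namespace Quiv

variable {Q : Quiv}

/-- The list of arrows traversed by a path. -/
def arrowsOf : ∀ {i j : Q.V}, Quiver.Path i j → List Q.A
  | _, _, Quiver.Path.nil => []
  | _, _, Quiver.Path.cons p a => arrowsOf p ++ [a.1]

/-- The list of vertices visited by a path. -/
def vertsOf : ∀ {i j : Q.V}, Quiver.Path i j → List Q.V
  | i, _, Quiver.Path.nil => [i]
  | _, _, Quiver.Path.cons p a => vertsOf p ++ [Q.t a.1]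

/-- An (oriented) cycle of a quiver: a nontrivial path from a vertex to itself. -/
def Cycle (Q : Quiv) : Type :=
  Σ x : Q.V, {c : Quiver.Path x x // 0 < c.length}

/-- The arrows of a cycle, as a set. -/
def Cycle.arrowSet (c : Q.Cycle) : Set Q.A := {a | a ∈ arrowsOf c.2.1}

/-- The vertices of a cycle, as a set. -/
def Cycle.vertSet (c : Q.Cycle) : Set Q.V := {v | v ∈ vertsOf c.2.1}

end Quiv

/-- The exclusive condition: any two distinct oriented cycles (i.e., cycles with different
sets of arrows) are vertex-disjoint. -/
def Quiv.Exclusive (Q : Quiv) : Prop :=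
  ∀ c d : Q.Cycle, c.arrowSet ≠ d.arrowSet → c.vertSet ∩ d.vertSet = ∅

/-- `c ⇒ d`: there is a path from a vertex of the cycle `c` to a vertex of the cycle `d`. -/
def Quiv.Cycle.Reaches {Q : Quiv} (c d : Q.Cycle) : Prop :=
  ∃ u ∈ c.vertSet, ∃ v ∈ d.vertSet, Nonempty (Quiver.Path u v)

/-- `Q` has a chain of cycles of length `n`: pairwise distinct cycles
`c_1 ⇒ c_2 ⇒ ⋯ ⇒ c_n`. -/
def Quiv.HasChainOfCycles (Q : Quiv) (n : ℕ) : Prop :=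
  ∃ cs : Fin n → Q.Cycle,
    (∀ i j, i ≠ j → (cs i).arrowSet ≠ (cs j).arrowSet) ∧
    ∀ (i : ℕ) (h : i + 1 < n),
      (cs ⟨i, Nat.lt_of_succ_lt h⟩).Reaches (cs ⟨i + 1, h⟩)

namespace Quiv

variable {Q : Quiv}

-- ===== basic lemmas =====

@[simp] lemma arrowsOf_nil {i : Q.V} : arrowsOf (Quiver.Path.nil : Quiver.Path i i) = [] := by
  simp [arrowsOf]

@[simp] lemma arrowsOf_cons {i j k : Q.V} (p : Quiver.Path i j) (a : j ⟶ k) :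
    arrowsOf (p.cons a) = arrowsOf p ++ [a.1] := by simp [arrowsOf]

@[simp] lemma vertsOf_nil {i : Q.V} : vertsOf (Quiver.Path.nil : Quiver.Path i i) = [i] := by
  simp [vertsOf]

@[simp] lemma vertsOf_cons {i j k : Q.V} (p : Quiver.Path i j) (a : j ⟶ k) :
    vertsOf (p.cons a) = vertsOf p ++ [Q.t a.1] := by simp [vertsOf]

lemma length_arrowsOf : ∀ {i j : Q.V} (p : Quiver.Path i j), (arrowsOf p).length = p.length
  | _, _, Quiver.Path.nil => by simp
  | _, _, Quiver.Path.cons p a => by simp [length_arrowsOf p]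

lemma arrowsOf_comp : ∀ {i j k : Q.V} (p : Quiver.Path i j) (q : Quiver.Path j k),
    arrowsOf (p.comp q) = arrowsOf p ++ arrowsOf q
  | _, _, _, p, Quiver.Path.nil => by simp
  | _, _, _, p, Quiver.Path.cons q a => by
      simp [Quiver.Path.comp_cons, arrowsOf_comp p q]

lemma vertsOf_eq_cons : ∀ {i j : Q.V} (p : Quiver.Path i j),
    vertsOf p = i :: (arrowsOf p).map Q.t
  | _, _, Quiver.Path.nil => by simp
  | _, _, Quiver.Path.cons p a => by simp [vertsOf_eq_cons p]

lemma vertsOf_eq_append : ∀ {i j : Q.V} (p : Quiver.Path i j),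
    vertsOf p = (arrowsOf p).map Q.s ++ [j]
  | _, _, Quiver.Path.nil => by simp
  | _, _, @Quiver.Path.cons _ _ _ j k p a => by
      simp [vertsOf_eq_append p, a.2.1, a.2.2]

lemma start_mem_vertsOf {i j : Q.V} (p : Quiver.Path i j) : i ∈ vertsOf p := by
  rw [vertsOf_eq_cons]; exact List.mem_cons_self

lemma end_mem_vertsOf {i j : Q.V} (p : Quiver.Path i j) : j ∈ vertsOf p := by
  rw [vertsOf_eq_append]; simp

lemma end_mem_map_t {i j : Q.V} (p : Quiver.Path i j) (hp : 0 < p.length) :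
    j ∈ (arrowsOf p).map Q.t := by
  cases p with
  | nil => simp at hp
  | cons p a => simp [a.2.2]

lemma t_mem_vertsOf {i j : Q.V} {p : Quiver.Path i j} {a : Q.A} (h : a ∈ arrowsOf p) :
    Q.t a ∈ vertsOf p := by
  rw [vertsOf_eq_cons]
  exact List.mem_cons_of_mem _ (List.mem_map_of_mem h)

lemma s_mem_vertsOf {i j : Q.V} {p : Quiver.Path i j} {a : Q.A} (h : a ∈ arrowsOf p) :
    Q.s a ∈ vertsOf p := by
  rw [vertsOf_eq_append]
  exact List.mem_append_left _ (List.mem_map_of_mem h)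

lemma vertsOf_comp {i j k : Q.V} (p : Quiver.Path i j) (q : Quiver.Path j k) :
    vertsOf (p.comp q) = (arrowsOf p).map Q.s ++ vertsOf q := by
  rw [vertsOf_eq_append (p.comp q), arrowsOf_comp, vertsOf_eq_append q, List.map_append,
    List.append_assoc]

lemma mem_vertsOf_comp {i j k : Q.V} {p : Quiver.Path i j} {q : Quiver.Path j k} {u : Q.V} :
    u ∈ vertsOf (p.comp q) ↔ u ∈ vertsOf p ∨ u ∈ vertsOf q := by
  rw [vertsOf_comp, List.mem_append]
  constructor
  · rintro (h | h)
    · exact Or.inl (by rw [vertsOf_eq_append]; exact List.mem_append_left _ h)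
    · exact Or.inr h
  · rintro (h | h)
    · rw [vertsOf_eq_append, List.mem_append] at h
      rcases h with h | h
      · exact Or.inl h
      · simp only [List.mem_singleton] at h
        subst h
        exact Or.inr (start_mem_vertsOf q)
    · exact Or.inr h

end Quiv

namespace Quiv

variable {Q : Quiv}

/-- Split a path at a vertex it visits. -/
lemma splitAtVertex {i j : Q.V} (p : Quiver.Path i j) {v : Q.V} (hv : v ∈ vertsOf p) :
    ∃ (q : Quiver.Path i v) (r : Quiver.Path v j),
      arrowsOf p = arrowsOf q ++ arrowsOf r := by
  induction p with
  | nil =>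
      simp only [vertsOf_nil, List.mem_singleton] at hv
      subst hv
      exact ⟨Quiver.Path.nil, Quiver.Path.nil, by simp⟩
  | cons p a ih =>
      rw [vertsOf_cons, List.mem_append, List.mem_singleton] at hv
      rcases hv with hv | hv
      · obtain ⟨q, r, hr⟩ := ih hv
        exact ⟨q, r.cons a, by simp [hr]⟩
      · have : v = _ := hv.trans a.2.2
        subst this
        exact ⟨p.cons a, Quiver.Path.nil, by simp⟩

/-- Split a path at a given length. -/
lemma splitAtLength {i j : Q.V} (p : Quiver.Path i j) (t : ℕ) (ht : t ≤ p.length) :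
    ∃ (v : Q.V) (q : Quiver.Path i v) (r : Quiver.Path v j),
      q.length = t ∧ arrowsOf p = arrowsOf q ++ arrowsOf r := by
  induction p with
  | nil =>
      simp only [Quiver.Path.length_nil, Nat.le_zero] at ht
      exact ⟨i, Quiver.Path.nil, Quiver.Path.nil, by simp [ht], by simp⟩
  | cons p a ih =>
      rcases Nat.lt_or_ge t (p.length + 1) with h | h
      · obtain ⟨v, q, r, h1, h2⟩ := ih (Nat.lt_succ_iff.mp h)
        exact ⟨v, q, r.cons a, h1, by simp [h2]⟩
      · have : t = p.length + 1 := le_antisymm (by simpa using ht) h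
        subst this
        exact ⟨_, p.cons a, Quiver.Path.nil, by simp, by simp⟩

/-- Split a path at the first occurrence of an arrow. -/
lemma splitAtFirstArrow {i j : Q.V} (p : Quiver.Path i j) {b : Q.A} (hb : b ∈ arrowsOf p) :
    ∃ (w z : Q.V) (q : Quiver.Path i w) (e : w ⟶ z) (r : Quiver.Path z j),
      e.1 = b ∧ arrowsOf p = arrowsOf q ++ b :: arrowsOf r ∧ b ∉ arrowsOf q := by
  induction p with
  | nil => simp at hb
  | cons p a ih =>
      by_cases h : b ∈ arrowsOf p
      · obtain ⟨w, z, q, e, r, h1, h2, h3⟩ := ih h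
        exact ⟨w, z, q, e, r.cons a, h1, by simp [h2], h3⟩
      · rw [arrowsOf_cons, List.mem_append, List.mem_singleton] at hb
        rcases hb with hb | hb
        · exact absurd hb h
        · subst hb
          exact ⟨_, _, p, a, Quiver.Path.nil, rfl, by simp, h⟩

/-- Memberships of vertices after an arrows-split. -/
lemma mem_verts_of_split {i j v : Q.V} {p : Quiver.Path i j} {q : Quiver.Path i v}
    {r : Quiver.Path v j} (h : arrowsOf p = arrowsOf q ++ arrowsOf r) (u : Q.V) :
    u ∈ vertsOf p ↔ u ∈ vertsOf q ∨ u ∈ vertsOf r := by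
  have hv : v ∈ vertsOf q := end_mem_vertsOf q
  rw [vertsOf_eq_cons p, vertsOf_eq_cons q, vertsOf_eq_cons r, h]
  simp only [List.map_append, List.mem_cons, List.mem_append]
  constructor
  · rintro (h | h | h)
    · exact Or.inl (Or.inl h)
    · exact Or.inl (Or.inr h)
    · exact Or.inr (Or.inr h)
  · rintro ((h | h) | (h | h))
    · exact Or.inl h
    · exact Or.inr (Or.inl h)
    · -- u = v, v ∈ verts q
      subst h
      rw [vertsOf_eq_cons q] at hv
      rcases List.mem_cons.mp hv with h | h
      · exact Or.inl h
      · exact Or.inr (Or.inl h)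
    · exact Or.inr (Or.inr h)

/-- Rotation of a closed path to another of its vertices. -/
lemma rotate {x : Q.V} (p : Quiver.Path x x) {v : Q.V} (hv : v ∈ vertsOf p) :
    ∃ ρ : Quiver.Path v v, ρ.length = p.length ∧
      (∀ a, a ∈ arrowsOf ρ ↔ a ∈ arrowsOf p) ∧
      (∀ u, u ∈ vertsOf ρ ↔ u ∈ vertsOf p) := by
  obtain ⟨q, r, h⟩ := splitAtVertex p hv
  refine ⟨r.comp q, ?_, ?_, ?_⟩
  · rw [← length_arrowsOf, ← length_arrowsOf, arrowsOf_comp, h]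
    simp [Nat.add_comm]
  · intro a
    rw [arrowsOf_comp, h]
    simp only [List.mem_append]
    tauto
  · intro u
    rw [mem_vertsOf_comp, mem_verts_of_split h u]
    tauto

/-- Power of a closed path. -/
def pathPow {x : Q.V} (p : Quiver.Path x x) : ℕ → Quiver.Path x x
  | 0 => Quiver.Path.nil
  | n + 1 => (pathPow p n).comp p

@[simp] lemma pathPow_length {x : Q.V} (p : Quiver.Path x x) (n : ℕ) :
    (pathPow p n).length = n * p.length := by
  induction n with
  | zero => simp [pathPow]
  | succ n ih => simp [pathPow, Quiver.Path.length_comp, ih, Nat.succ_mul]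

lemma mem_arrowsOf_pathPow {x : Q.V} {p : Quiver.Path x x} {n : ℕ} {a : Q.A} :
    a ∈ arrowsOf (pathPow p n) → a ∈ arrowsOf p := by
  induction n with
  | zero => simp [pathPow]
  | succ n ih =>
      intro h
      rw [pathPow, arrowsOf_comp, List.mem_append] at h
      tauto

lemma mem_arrowsOf_pathPow' {x : Q.V} {p : Quiver.Path x x} {n : ℕ} (hn : 0 < n) {a : Q.A}
    (h : a ∈ arrowsOf p) : a ∈ arrowsOf (pathPow p n) := by
  cases n with
  | zero => omega
  | succ n => rw [pathPow, arrowsOf_comp, List.mem_append]; exact Or.inr h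

lemma mem_vertsOf_pathPow {x : Q.V} {p : Quiver.Path x x} {n : ℕ} {u : Q.V}
    (h : u ∈ vertsOf (pathPow p n)) : u ∈ vertsOf p := by
  induction n with
  | zero =>
      simp only [pathPow, vertsOf_nil, List.mem_singleton] at h
      subst h
      exact start_mem_vertsOf p
  | succ n ih =>
      rw [pathPow, mem_vertsOf_comp] at h
      tauto

/-- There is a path between any two vertices of a closed path, staying on that path. -/
lemma connect {x : Q.V} (p : Quiver.Path x x) {v v' : Q.V} (hv : v ∈ vertsOf p)
    (hv' : v' ∈ vertsOf p) :
    ∃ P : Quiver.Path v v', ∀ a ∈ arrowsOf P, a ∈ arrowsOf p := by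
  obtain ⟨ρ, _, hρa, hρv⟩ := rotate p hv
  obtain ⟨q, r, h⟩ := splitAtVertex ρ ((hρv v').mpr hv')
  refine ⟨q, fun a ha => ?_⟩
  exact (hρa a).mp (by rw [h, List.mem_append]; exact Or.inl ha)

end Quiv

namespace Quiv

variable {Q : Quiv}

/-- Two cycles sharing a vertex have equal arrow sets (under exclusivity). -/
lemma arrowSet_eq_of_shared_vertex (hex : Q.Exclusive) {c d : Q.Cycle} {v : Q.V}
    (hc : v ∈ c.vertSet) (hd : v ∈ d.vertSet) : c.arrowSet = d.arrowSet := by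
  by_contra h
  have := hex c d h
  have : v ∈ c.vertSet ∩ d.vertSet := ⟨hc, hd⟩
  rw [hex c d h] at this
  exact this

/-- The vertex set of a cycle is the image of its arrow set under the target map. -/
lemma mem_vertSet_iff (c : Q.Cycle) {v : Q.V} :
    v ∈ c.vertSet ↔ ∃ a ∈ c.arrowSet, Q.t a = v := by
  constructor
  · intro h
    have h' : v ∈ vertsOf c.2.1 := h
    rw [vertsOf_eq_cons] at h'
    rcases List.mem_cons.mp h' with h' | h'
    · subst h'
      obtain ⟨a, ha, hta⟩ := List.mem_map.mp (end_mem_map_t c.2.1 c.2.2)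
      exact ⟨a, ha, hta⟩
    · obtain ⟨a, ha, hta⟩ := List.mem_map.mp h'
      exact ⟨a, ha, hta.symm ▸ rfl⟩
  · rintro ⟨a, ha, rfl⟩
    exact t_mem_vertsOf ha

lemma vertSet_eq_of_arrowSet_eq {c d : Q.Cycle} (h : c.arrowSet = d.arrowSet) :
    c.vertSet = d.vertSet := by
  ext v
  rw [mem_vertSet_iff, mem_vertSet_iff, h]

/-- Every vertex of a cycle is the source of an arrow of the cycle. -/
lemma exists_src_of_mem_vertSet (c : Q.Cycle) {v : Q.V} (hv : v ∈ c.vertSet) :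
    ∃ a ∈ c.arrowSet, Q.s a = v := by
  have h' : v ∈ vertsOf c.2.1 := hv
  rw [vertsOf_eq_append] at h'
  rcases List.mem_append.mp h' with h' | h'
  · obtain ⟨a, ha, hsa⟩ := List.mem_map.mp h'
    exact ⟨a, ha, hsa⟩
  · simp only [List.mem_singleton] at h'
    subst h'
    -- v is the base point; it is the source of the first arrow
    have hne : arrowsOf c.2.1 ≠ [] := by
      intro h
      have hpos := c.2.2
      rw [← length_arrowsOf, h] at hpos
      simp at hpos
    obtain ⟨a, l, hl⟩ := List.exists_cons_of_ne_nil hne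
    have hva : vertsOf c.2.1 = c.1 :: (arrowsOf c.2.1).map Q.t := vertsOf_eq_cons c.2.1
    have hvs : vertsOf c.2.1 = (arrowsOf c.2.1).map Q.s ++ [c.1] := vertsOf_eq_append c.2.1
    have hsac : Q.s a = c.1 := by
      have h2 := hva.symm.trans hvs
      rw [hl] at h2
      simpa using congrArg (fun L => L.head?) h2.symm
    exact ⟨a, by show a ∈ arrowsOf c.2.1; simp [hl], hsac⟩

/-- Confinement: a path between two vertices of a cycle stays in the cycle. -/
lemma confinement (hex : Q.Exclusive) (c : Q.Cycle) {u v : Q.V} (hu : u ∈ c.vertSet)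
    (hv : v ∈ c.vertSet) (p : Quiver.Path u v) :
    (∀ a ∈ arrowsOf p, a ∈ c.arrowSet) ∧ (∀ w ∈ vertsOf p, w ∈ c.vertSet) := by
  obtain ⟨q, hq⟩ := connect c.2.1 hv hu
  obtain ⟨ρ, hρl, hρa, hρv⟩ := rotate c.2.1 (hu : u ∈ vertsOf c.2.1)
  set e : Quiver.Path u u := (p.comp q).comp ρ with he
  have hepos : 0 < e.length := by
    rw [he]
    simp only [Quiver.Path.length_comp]
    have := c.2.2
    omega
  set E : Q.Cycle := ⟨u, e, hepos⟩ with hE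
  have hEc : E.arrowSet = c.arrowSet :=
    arrowSet_eq_of_shared_vertex hex (start_mem_vertsOf e) hu
  have harr : ∀ a ∈ arrowsOf p, a ∈ c.arrowSet := by
    intro a ha
    have : a ∈ arrowsOf e := by
      rw [he, arrowsOf_comp, arrowsOf_comp]
      simp [ha]
    rw [← hEc]
    exact this
  refine ⟨harr, fun w hw => ?_⟩
  have : w ∈ vertsOf e := by
    rw [he, mem_vertsOf_comp, mem_vertsOf_comp]
    exact Or.inl (Or.inl hw)
  have : w ∈ E.vertSet := this
  rwa [vertSet_eq_of_arrowSet_eq hEc] at this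

/-- Unique out-arrow: under exclusivity, a vertex has at most one outgoing arrow
within a given cycle. -/
lemma unique_out_arrow (hex : Q.Exclusive) (c : Q.Cycle) {a b : Q.A}
    (ha : a ∈ c.arrowSet) (hb : b ∈ c.arrowSet) (hs : Q.s a = Q.s b) : a = b := by
  by_contra hab
  -- split the cycle at the first occurrence of a, rotate to start with a
  obtain ⟨w, z, q, e, r, he1, he2, -⟩ := splitAtFirstArrow c.2.1 (ha : a ∈ arrowsOf c.2.1)
  -- ρ : closed path at w starting with arrow a
  set ρ : Quiver.Path w w := ((Quiver.Path.nil.cons e).comp r).comp q with hρ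
  have hρarr : arrowsOf ρ = a :: (arrowsOf r ++ arrowsOf q) := by
    rw [hρ, arrowsOf_comp, arrowsOf_comp]
    simp [he1]
  -- b occurs in ρ
  have hbρ : b ∈ arrowsOf ρ := by
    have hbc : b ∈ arrowsOf c.2.1 := hb
    rw [he2, List.mem_append, List.mem_cons] at hbc
    rw [hρarr, List.mem_cons, List.mem_append]
    rcases hbc with h | h | h
    · exact Or.inr (Or.inr h)
    · exact absurd h.symm hab
    · exact Or.inr (Or.inl h)
  -- split ρ at the first occurrence of b
  obtain ⟨w2, z2, q2, e2, r2, hf1, hf2, hf3⟩ := splitAtFirstArrow ρ hbρ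
  have hww : w2 = w := by
    have h1 : Q.s e2.1 = w2 := e2.2.1
    have h2 : Q.s e.1 = w := e.2.1
    rw [hf1] at h1
    rw [he1] at h2
    rw [← h1, ← hs, h2]
  subst hww
  -- q2 is nontrivial since ρ starts with a ≠ b
  have hq2ne : arrowsOf q2 ≠ [] := by
    intro hnil
    have h2 : a :: (arrowsOf r ++ arrowsOf q) = b :: arrowsOf r2 := by
      rw [← hρarr, hf2, hnil, List.nil_append]
    exact hab (List.cons_eq_cons.mp h2).1
  have hq2pos : 0 < q2.length := by
    rw [← length_arrowsOf]
    exact List.length_pos_iff.mpr hq2ne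
  set cyc1 : Q.Cycle := ⟨w2, q2, hq2pos⟩ with hc1
  set σ2 : Quiver.Path w2 w2 := (Quiver.Path.nil.cons e2).comp r2 with hσ2
  have hσ2pos : 0 < σ2.length := by
    rw [hσ2]
    simp [Quiver.Path.length_comp]
  set cyc2 : Q.Cycle := ⟨w2, σ2, hσ2pos⟩ with hc2
  have heq : cyc1.arrowSet = cyc2.arrowSet :=
    arrowSet_eq_of_shared_vertex hex (start_mem_vertsOf q2) (start_mem_vertsOf σ2)
  have hb2 : b ∈ cyc2.arrowSet := by
    show b ∈ arrowsOf σ2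
    rw [hσ2, arrowsOf_comp]
    simp [hf1]
  rw [← heq] at hb2
  exact hf3 hb2

end Quiv

namespace Quiv

variable {Q : Quiv}

/-- First projection of a path in the Kronecker square. -/
def proj1Path : ∀ {i j : (Q.kron).V}, Quiver.Path i j → Quiver.Path i.1 j.1
  | _, _, Quiver.Path.nil => Quiver.Path.nil
  | _, _, Quiver.Path.cons p a =>
      (proj1Path p).cons ⟨a.1.1, congrArg Prod.fst a.2.1, congrArg Prod.fst a.2.2⟩

/-- Second projection of a path in the Kronecker square. -/
def proj2Path : ∀ {i j : (Q.kron).V}, Quiver.Path i j → Quiver.Path i.2 j.2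
  | _, _, Quiver.Path.nil => Quiver.Path.nil
  | _, _, Quiver.Path.cons p a =>
      (proj2Path p).cons ⟨a.1.2, congrArg Prod.snd a.2.1, congrArg Prod.snd a.2.2⟩

lemma length_proj1Path : ∀ {i j : (Q.kron).V} (p : Quiver.Path i j),
    (proj1Path p).length = p.length
  | _, _, Quiver.Path.nil => by simp [proj1Path]
  | _, _, Quiver.Path.cons p a => by
      simp [proj1Path, length_proj1Path p]

lemma length_proj2Path : ∀ {i j : (Q.kron).V} (p : Quiver.Path i j),
    (proj2Path p).length = p.length
  | _, _, Quiver.Path.nil => by simp [proj2Path]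
  | _, _, Quiver.Path.cons p a => by
      simp [proj2Path, length_proj2Path p]

lemma arrowsOf_proj1Path : ∀ {i j : (Q.kron).V} (p : Quiver.Path i j),
    arrowsOf (proj1Path p) = (arrowsOf p).map Prod.fst
  | _, _, Quiver.Path.nil => by simp [proj1Path]; rfl
  | _, _, Quiver.Path.cons p a => by
      simp [proj1Path, arrowsOf_proj1Path p]
      exact (List.map_append (f := Prod.fst) (l₁ := arrowsOf p) (l₂ := [a.1])).symm

lemma arrowsOf_proj2Path : ∀ {i j : (Q.kron).V} (p : Quiver.Path i j),
    arrowsOf (proj2Path p) = (arrowsOf p).map Prod.snd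
  | _, _, Quiver.Path.nil => by simp [proj2Path]; rfl
  | _, _, Quiver.Path.cons p a => by
      simp [proj2Path, arrowsOf_proj2Path p]
      exact (List.map_append (f := Prod.snd) (l₁ := arrowsOf p) (l₂ := [a.1])).symm

lemma vertsOf_proj1Path : ∀ {i j : (Q.kron).V} (p : Quiver.Path i j),
    vertsOf (proj1Path p) = (vertsOf p).map Prod.fst
  | _, _, Quiver.Path.nil => by simp [proj1Path]; rfl
  | _, _, Quiver.Path.cons p a => by
      simp [proj1Path, vertsOf_proj1Path p]
      exact (List.map_append (f := Prod.fst) (l₁ := vertsOf p) (l₂ := [(Q.kron).t a.1])).symm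

lemma vertsOf_proj2Path : ∀ {i j : (Q.kron).V} (p : Quiver.Path i j),
    vertsOf (proj2Path p) = (vertsOf p).map Prod.snd
  | _, _, Quiver.Path.nil => by simp [proj2Path]; rfl
  | _, _, Quiver.Path.cons p a => by
      simp [proj2Path, vertsOf_proj2Path p]
      exact (List.map_append (f := Prod.snd) (l₁ := vertsOf p) (l₂ := [(Q.kron).t a.1])).symm

/-- First projection of a cycle in the Kronecker square. -/
def projCycle1 (c : (Q.kron).Cycle) : Q.Cycle :=
  ⟨c.1.1, proj1Path c.2.1, by rw [length_proj1Path]; exact c.2.2⟩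

def projCycle2 (c : (Q.kron).Cycle) : Q.Cycle :=
  ⟨c.1.2, proj2Path c.2.1, by rw [length_proj2Path]; exact c.2.2⟩

/-- Zipping two paths of equal length into a path of the Kronecker square. -/
lemma zip_exists : ∀ {u v w z : Q.V} (p : Quiver.Path u v) (q : Quiver.Path w z),
    p.length = q.length →
    ∃ r : @Quiver.Path (Q.kron).V (toQuiver Q.kron) (u, w) (v, z),
      r.length = p.length ∧ arrowsOf (Q := Q.kron) r = (arrowsOf p).zip (arrowsOf q) ∧
      vertsOf (Q := Q.kron) r = (vertsOf p).zip (vertsOf q) := by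
  intro u v w z p q h
  induction p generalizing z q with
  | nil =>
      cases q with
      | nil => exact ⟨Quiver.Path.nil, rfl, arrowsOf_nil.trans (by simp; rfl), vertsOf_nil.trans (by simp; rfl)⟩
      | cons q b => simp at h
  | cons p a ih =>
      cases q with
      | nil => simp at h
      | cons q b =>
          simp only [Quiver.Path.length_cons, Nat.succ.injEq] at h
          obtain ⟨r, hr1, hr2, hr3⟩ := ih q h
          refine ⟨r.cons ⟨(a.1, b.1), ?_, ?_⟩, (Quiver.Path.length_cons _ _ _ r _).trans (congrArg (· + 1) hr1), ?_, ?_⟩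
          · show ((Q.s a.1, Q.s b.1) : (Q.kron).V) = _
            rw [a.2.1, b.2.1]
          · show ((Q.t a.1, Q.t b.1) : (Q.kron).V) = _
            rw [a.2.2, b.2.2]
          · refine (arrowsOf_cons (Q := Q.kron) r _).trans ((congrArg (· ++ [((a.1, b.1) : Q.A × Q.A)]) hr2).trans ?_)
            have hl : (arrowsOf p).length = (arrowsOf q).length := by
              rw [length_arrowsOf, length_arrowsOf, h]
            rw [arrowsOf_cons, arrowsOf_cons, List.zip_append hl]
            rfl
          · refine (vertsOf_cons (Q := Q.kron) r _).trans ((congrArg (· ++ [((Q.t a.1, Q.t b.1) : Q.V × Q.V)]) hr3).trans ?_)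
            have hl : (vertsOf p).length = (vertsOf q).length := by
              rw [vertsOf_eq_cons, vertsOf_eq_cons]
              simp [length_arrowsOf, h]
            rw [vertsOf_cons, vertsOf_cons, List.zip_append hl]
            rfl

end Quiv

namespace Quiv

variable {Q : Quiv}

/-- A choice of "next arrow" function for a cycle, under exclusivity. -/
lemma exists_step (hex : Q.Exclusive) (c : Q.Cycle) :
    ∃ A : Q.V → Q.A, (∀ a ∈ c.arrowSet, A (Q.s a) = a) ∧
      (∀ v ∈ c.vertSet, A v ∈ c.arrowSet ∧ Q.s (A v) = v) := by
  classical
  have hne : ∃ a, a ∈ c.arrowSet := by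
    have hne' : arrowsOf c.2.1 ≠ [] := by
      intro h
      have hpos := c.2.2
      rw [← length_arrowsOf, h] at hpos
      simp at hpos
    obtain ⟨a, l, hl⟩ := List.exists_cons_of_ne_nil hne'
    exact ⟨a, by show a ∈ arrowsOf c.2.1; simp [hl]⟩
  refine ⟨fun v => if h : ∃ a ∈ c.arrowSet, Q.s a = v then h.choose else hne.choose, ?_, ?_⟩
  · intro a ha
    have h : ∃ b ∈ c.arrowSet, Q.s b = Q.s a := ⟨a, ha, rfl⟩
    simp only [dif_pos h]
    exact unique_out_arrow hex c h.choose_spec.1 ha h.choose_spec.2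
  · intro v hv
    have h : ∃ a ∈ c.arrowSet, Q.s a = v := exists_src_of_mem_vertSet c hv
    simp only [dif_pos h]
    exact ⟨h.choose_spec.1, h.choose_spec.2⟩

/-- Determinism: a path whose arrows all lie in a "functional" set of arrows is completely
determined by its starting point and its length. -/
lemma determ {R : Quiv} (C : Set R.A) (A : R.V → R.A) (hA : ∀ a ∈ C, A (R.s a) = a) :
    ∀ {i j : R.V} (p : Quiver.Path i j), (∀ a ∈ arrowsOf p, a ∈ C) →
      j = (fun v => R.t (A v))^[p.length] i ∧
      arrowsOf p = (List.range p.length).map (fun k => A ((fun v => R.t (A v))^[k] i)) ∧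
      vertsOf p = (List.range (p.length + 1)).map (fun k => (fun v => R.t (A v))^[k] i) := by
  intro i j p
  induction p with
  | nil => intro _; refine ⟨rfl, by simp, by simp⟩
  | cons p a ih =>
      intro hC
      have hC' : ∀ b ∈ arrowsOf p, b ∈ C := fun b hb => hC b (by simp [hb])
      obtain ⟨h1, h2, h3⟩ := ih hC'
      have haC : a.1 ∈ C := hC a.1 (by simp)
      have hAa := hA a.1 haC
      rw [a.2.1] at hAa
      constructor
      · rw [Quiver.Path.length_cons, Function.iterate_succ_apply', ← h1]
        show _ = R.t (A _)
        rw [hAa]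
        exact a.2.2.symm
      constructor
      · rw [arrowsOf_cons, h2, Quiver.Path.length_cons, List.range_succ, List.map_append]
        congr 1
        simp only [List.map_cons, List.map_nil]
        rw [← h1, hAa]
      · have key : (fun v => R.t (A v))^[p.length + 1] i = R.t a.1 := by
          rw [Function.iterate_succ_apply', ← h1]
          show R.t (A _) = _
          rw [hAa]
        rw [vertsOf_cons, h3]
        conv_rhs => rw [show (p.cons a).length + 1 = (p.length + 1) + 1 by simp,
          List.range_succ]
        rw [List.map_append]
        congr 1
        simp only [List.map_cons, List.map_nil]
        rw [key]

/-- Iterated-fixed-point: reduce an exponent modulo the period. -/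
lemma iterate_mod {α : Type} (f : α → α) {L : ℕ} (hL : 0 < L) {x : α} (hx : f^[L] x = x)
    (r : ℕ) : f^[r] x = f^[r % L] x := by
  conv_lhs => rw [show r = r % L + L * (r / L) by rw [Nat.mod_add_div r L]]
  rw [Function.iterate_add_apply, Function.iterate_mul]
  congr 1
  exact Function.iterate_fixed hx _

/-- Antisymmetry of reachability on cycles, under exclusivity. -/
lemma arrowSet_eq_of_reaches_both (hex : Q.Exclusive) {c d : Q.Cycle}
    (h1 : c.Reaches d) (h2 : d.Reaches c) : c.arrowSet = d.arrowSet := by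
  obtain ⟨u, hu, v, hv, ⟨p⟩⟩ := h1
  obtain ⟨v', hv', u', hu', ⟨q⟩⟩ := h2
  -- connect v to v' inside d, and u' to u inside c
  obtain ⟨P, -⟩ := connect d.2.1 (hv : v ∈ vertsOf d.2.1) hv'
  obtain ⟨S, -⟩ := connect c.2.1 (hu' : u' ∈ vertsOf c.2.1) hu
  obtain ⟨ρ, hρl, -, -⟩ := rotate c.2.1 (hu : u ∈ vertsOf c.2.1)
  set e : Quiver.Path u u := (((p.comp P).comp q).comp S).comp ρ with he
  have hepos : 0 < e.length := by
    rw [he]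
    simp only [Quiver.Path.length_comp]
    have := c.2.2
    omega
  set E : Q.Cycle := ⟨u, e, hepos⟩ with hE
  have hEc : E.arrowSet = c.arrowSet :=
    arrowSet_eq_of_shared_vertex hex (start_mem_vertsOf e) hu
  have hvE : v ∈ E.vertSet := by
    show v ∈ vertsOf e
    rw [he, mem_vertsOf_comp, mem_vertsOf_comp, mem_vertsOf_comp, mem_vertsOf_comp]
    exact Or.inl (Or.inl (Or.inl (Or.inl (end_mem_vertsOf p))))
  have hvc : v ∈ c.vertSet := by
    rwa [vertSet_eq_of_arrowSet_eq hEc] at hvE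
  exact arrowSet_eq_of_shared_vertex hex hvc hv

/-- Transitivity of reachability (in any quiver). -/
lemma reaches_trans {c d e : Q.Cycle} (h1 : c.Reaches d) (h2 : d.Reaches e) :
    c.Reaches e := by
  obtain ⟨u, hu, v, hv, ⟨p⟩⟩ := h1
  obtain ⟨v', hv', w, hw, ⟨q⟩⟩ := h2
  obtain ⟨P, -⟩ := connect d.2.1 (hv : v ∈ vertsOf d.2.1) hv'
  exact ⟨u, hu, w, hw, ⟨(p.comp P).comp q⟩⟩

end Quiv

namespace Quiv

variable {Q : Quiv}

lemma mem1_of_mem_kron {i j : (Q.kron).V} {p : Quiver.Path i j} {a : (Q.kron).A}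
    (h : a ∈ arrowsOf (Q := Q.kron) p) : a.1 ∈ arrowsOf (proj1Path p) := by
  rw [arrowsOf_proj1Path]
  exact List.mem_map_of_mem h

lemma mem2_of_mem_kron {i j : (Q.kron).V} {p : Quiver.Path i j} {a : (Q.kron).A}
    (h : a ∈ arrowsOf (Q := Q.kron) p) : a.2 ∈ arrowsOf (proj2Path p) := by
  rw [arrowsOf_proj2Path]
  exact List.mem_map_of_mem h

lemma memv1_of_mem_kron {i j : (Q.kron).V} {p : Quiver.Path i j} {u : (Q.kron).V}
    (h : u ∈ vertsOf (Q := Q.kron) p) : u.1 ∈ vertsOf (proj1Path p) := by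
  rw [vertsOf_proj1Path]
  exact List.mem_map_of_mem h

lemma memv2_of_mem_kron {i j : (Q.kron).V} {p : Quiver.Path i j} {u : (Q.kron).V}
    (h : u ∈ vertsOf (Q := Q.kron) p) : u.2 ∈ vertsOf (proj2Path p) := by
  rw [vertsOf_proj2Path]
  exact List.mem_map_of_mem h

/-- The key rigidity lemma: two cycles of the Kronecker square whose two projections
have the same arrow sets, one reaching the other, have equal arrow sets. -/
lemma kron_rigid (hex : Q.Exclusive) {cc dd : (Q.kron).Cycle}
    (hre : cc.Reaches dd)
    (h1 : (projCycle1 cc).arrowSet = (projCycle1 dd).arrowSet)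
    (h2 : (projCycle2 cc).arrowSet = (projCycle2 dd).arrowSet) :
    cc.arrowSet = dd.arrowSet := by
  obtain ⟨A1, hA1, hA1'⟩ := exists_step hex (projCycle1 cc)
  obtain ⟨A2, hA2, hA2'⟩ := exists_step hex (projCycle2 cc)
  set AA : (Q.kron).V → (Q.kron).A := fun v => (A1 v.1, A2 v.2) with hAA
  set CC : Set (Q.kron).A :=
    {a | a.1 ∈ (projCycle1 cc).arrowSet ∧ a.2 ∈ (projCycle2 cc).arrowSet} with hCC
  have hstep : ∀ a ∈ CC, AA ((Q.kron).s a) = a := by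
    intro a ha
    show ((A1 (Q.s a.1), A2 (Q.s a.2)) : (Q.kron).A) = a
    rw [hA1 _ ha.1, hA2 _ ha.2]
    exact Prod.mk.eta
  -- the step function
  set σ : (Q.kron).V → (Q.kron).V := fun v => (Q.kron).t (AA v) with hσ
  have hLc : 0 < cc.2.1.length := cc.2.2
  have hLd : 0 < dd.2.1.length := dd.2.2
  -- determinism applied to the path of cc
  have hccC : ∀ a ∈ arrowsOf (Q := Q.kron) cc.2.1, a ∈ CC := by
    intro a ha
    exact ⟨mem1_of_mem_kron ha, mem2_of_mem_kron ha⟩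
  obtain ⟨e1, f1, g1⟩ := determ CC AA hstep cc.2.1 hccC
  -- determinism applied to the path of dd
  have hddC : ∀ a ∈ arrowsOf (Q := Q.kron) dd.2.1, a ∈ CC := by
    intro a ha
    refine ⟨?_, ?_⟩
    · have := mem1_of_mem_kron ha
      show a.1 ∈ (projCycle1 cc).arrowSet
      rw [h1]
      exact this
    · have := mem2_of_mem_kron ha
      show a.2 ∈ (projCycle2 cc).arrowSet
      rw [h2]
      exact this
  obtain ⟨e2, f2, g2⟩ := determ CC AA hstep dd.2.1 hddC
  -- the connecting path
  obtain ⟨u, hu, v, hv, ⟨q⟩⟩ := hre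
  have hqC : ∀ a ∈ arrowsOf (Q := Q.kron) q, a ∈ CC := by
    intro a ha
    have hu1 : u.1 ∈ (projCycle1 cc).vertSet := memv1_of_mem_kron hu
    have hu2 : u.2 ∈ (projCycle2 cc).vertSet := memv2_of_mem_kron hu
    have hv1 : v.1 ∈ (projCycle1 cc).vertSet := by
      rw [vertSet_eq_of_arrowSet_eq h1]
      exact memv1_of_mem_kron hv
    have hv2 : v.2 ∈ (projCycle2 cc).vertSet := by
      rw [vertSet_eq_of_arrowSet_eq h2]
      exact memv2_of_mem_kron hv
    refine ⟨?_, ?_⟩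
    · exact (confinement hex (projCycle1 cc) hu1 hv1 (proj1Path q)).1 a.1 (mem1_of_mem_kron ha)
    · exact (confinement hex (projCycle2 cc) hu2 hv2 (proj2Path q)).1 a.2 (mem2_of_mem_kron ha)
  obtain ⟨e3, -, -⟩ := determ CC AA hstep q hqC
  -- positions of u and v
  have hu' : u ∈ vertsOf (Q := Q.kron) cc.2.1 := hu
  rw [g1, List.mem_map] at hu'
  obtain ⟨jj, -, hjj⟩ := hu'
  have hv' : v ∈ vertsOf (Q := Q.kron) dd.2.1 := hv
  rw [g2, List.mem_map] at hv'
  obtain ⟨b, -, hb⟩ := hv'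
  -- periodicity
  have hfixc : σ^[cc.2.1.length] cc.1 = cc.1 := e1.symm
  have hfixd : σ^[dd.2.1.length] dd.1 = dd.1 := e2.symm
  -- the crossing identity
  have hJ : σ^[q.length + jj] cc.1 = σ^[b] dd.1 := by
    rw [Function.iterate_add_apply, hjj, hb, ← e3]
  set J := q.length + jj with hJdef
  set Lc := cc.2.1.length
  set Ld := dd.2.1.length
  -- proof of set equality
  ext a
  show a ∈ arrowsOf (Q := Q.kron) cc.2.1 ↔ a ∈ arrowsOf (Q := Q.kron) dd.2.1
  rw [f1, f2, List.mem_map, List.mem_map]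
  constructor
  · rintro ⟨k, hk, rfl⟩
    rw [List.mem_range] at hk
    set s := k + Lc * J with hs
    have h5 : σ^[s] cc.1 = σ^[k] cc.1 := by
      rw [hs, Function.iterate_add_apply, Function.iterate_mul,
        Function.iterate_fixed hfixc]
    have hJle : J ≤ s := by
      rw [hs]
      calc J ≤ Lc * J := Nat.le_mul_of_pos_left J hLc
      _ ≤ k + Lc * J := Nat.le_add_left _ _
    have h6 : σ^[k] cc.1 = σ^[(s - J) + b] dd.1 := by
      have hsplit : σ^[s] cc.1 = σ^[s - J] (σ^[J] cc.1) := by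
        rw [← Function.iterate_add_apply]
        congr 1
        omega
      rw [← h5, hsplit, hJ, ← Function.iterate_add_apply]
    refine ⟨((s - J) + b) % Ld, List.mem_range.mpr (Nat.mod_lt _ hLd), ?_⟩
    rw [← iterate_mod σ hLd hfixd, ← h6]
  · rintro ⟨k, hk, rfl⟩
    rw [List.mem_range] at hk
    set s := k + Ld * b with hs
    have h5 : σ^[s] dd.1 = σ^[k] dd.1 := by
      rw [hs, Function.iterate_add_apply, Function.iterate_mul,
        Function.iterate_fixed hfixd]
    have hble : b ≤ s := by
      rw [hs]
      calc b ≤ Ld * b := Nat.le_mul_of_pos_left b hLd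
      _ ≤ k + Ld * b := Nat.le_add_left _ _
    have h6 : σ^[k] dd.1 = σ^[(s - b) + J] cc.1 := by
      have hsplit : σ^[s] dd.1 = σ^[s - b] (σ^[b] dd.1) := by
        rw [← Function.iterate_add_apply]
        congr 1
        omega
      rw [← h5, hsplit, ← hJ, ← Function.iterate_add_apply]
    refine ⟨((s - b) + J) % Lc, List.mem_range.mpr (Nat.mod_lt _ hLc), ?_⟩
    rw [← iterate_mod σ hLc hfixc, ← h6]

end Quiv

namespace Quiv

variable {Q : Quiv}

lemma reaches_proj1 {cc dd : (Q.kron).Cycle} (h : cc.Reaches dd) :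
    (projCycle1 cc).Reaches (projCycle1 dd) := by
  obtain ⟨u, hu, v, hv, ⟨p⟩⟩ := h
  exact ⟨u.1, memv1_of_mem_kron hu, v.1, memv1_of_mem_kron hv, ⟨proj1Path p⟩⟩

lemma reaches_proj2 {cc dd : (Q.kron).Cycle} (h : cc.Reaches dd) :
    (projCycle2 cc).Reaches (projCycle2 dd) := by
  obtain ⟨u, hu, v, hv, ⟨p⟩⟩ := h
  exact ⟨u.2, memv2_of_mem_kron hu, v.2, memv2_of_mem_kron hv, ⟨proj2Path p⟩⟩

lemma reaches_congr_right {c d d' : Q.Cycle} (h : c.Reaches d)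
    (hdd : d.vertSet = d'.vertSet) : c.Reaches d' := by
  obtain ⟨u, hu, v, hv, hp⟩ := h
  exact ⟨u, hu, v, by rwa [← hdd], hp⟩

/-- Upper bound: no chain of cycles in the Kronecker square is longer than `2n - 1`. -/
lemma kron_upper (hex : Q.Exclusive) (n : ℕ)
    (hn : ∀ k, Q.HasChainOfCycles k → k ≤ n) (m : ℕ)
    (hm : (Q.kron).HasChainOfCycles m) : m ≤ 2 * n - 1 := by
  classical
  obtain ⟨cs, hdist, hreach⟩ := hm
  rcases Nat.eq_zero_or_pos m with hm0 | hmpos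
  · omega
  -- transitive reachability along the chain
  have key : ∀ d i : ℕ, ∀ h : i + d + 1 < m,
      (cs ⟨i, by omega⟩).Reaches (cs ⟨i + d + 1, h⟩) := by
    intro d
    induction d with
    | zero => intro i h; exact hreach i h
    | succ d ih =>
        intro i h
        exact reaches_trans (ih i (by omega)) (hreach (i + d + 1) h)
  have htrans : ∀ i j : Fin m, i < j → (cs i).Reaches (cs j) := by
    intro i j hij
    have hij' : (i : ℕ) < (j : ℕ) := hij
    obtain ⟨d, hd⟩ : ∃ d, (j : ℕ) = (i : ℕ) + d + 1 := ⟨(j : ℕ) - (i : ℕ) - 1, by omega⟩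
    have hlt : (i : ℕ) + d + 1 < m := by rw [← hd]; exact j.isLt
    have := key d (i : ℕ) hlt
    convert this using 2
    exact Fin.ext hd
  set A : Fin m → Set Q.A := fun i => (projCycle1 (cs i)).arrowSet with hA
  set B : Fin m → Set Q.A := fun i => (projCycle2 (cs i)).arrowSet with hB
  have hkey : ∀ i j : Fin m, i < j → ¬(A i = A j ∧ B i = B j) := by
    rintro i j hij ⟨ha, hb⟩
    exact hdist i j (Fin.ne_of_lt hij) (kron_rigid hex (htrans i j hij) ha hb)
  -- interval closure
  have hclosedA : ∀ i k j : Fin m, i ≤ k → k ≤ j → A i = A j → A k = A i := by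
    intro i k j hik hkj hij
    rcases eq_or_lt_of_le hik with h | h
    · rw [← h]
    rcases eq_or_lt_of_le hkj with h' | h'
    · rw [h', hij]
    have r1 : (projCycle1 (cs i)).Reaches (projCycle1 (cs k)) :=
      reaches_proj1 (htrans i k h)
    have r2 : (projCycle1 (cs k)).Reaches (projCycle1 (cs i)) := by
      refine reaches_congr_right (reaches_proj1 (htrans k j h')) ?_
      exact vertSet_eq_of_arrowSet_eq hij.symm
    exact (arrowSet_eq_of_reaches_both hex r1 r2).symm
  have hclosedB : ∀ i k j : Fin m, i ≤ k → k ≤ j → B i = B j → B k = B i := by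
    intro i k j hik hkj hij
    rcases eq_or_lt_of_le hik with h | h
    · rw [← h]
    rcases eq_or_lt_of_le hkj with h' | h'
    · rw [h', hij]
    have r1 : (projCycle2 (cs i)).Reaches (projCycle2 (cs k)) :=
      reaches_proj2 (htrans i k h)
    have r2 : (projCycle2 (cs k)).Reaches (projCycle2 (cs i)) := by
      refine reaches_congr_right (reaches_proj2 (htrans k j h')) ?_
      exact vertSet_eq_of_arrowSet_eq hij.symm
    exact (arrowSet_eq_of_reaches_both hex r1 r2).symm
  -- first-occurrence index sets
  set Ia : Finset (Fin m) := Finset.univ.filter (fun i => ∀ j, j < i → A j ≠ A i) with hIa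
  set Ib : Finset (Fin m) := Finset.univ.filter (fun i => ∀ j, j < i → B j ≠ B i) with hIb
  have memIa : ∀ x : Fin m, x ∈ Ia ↔ ∀ j, j < x → A j ≠ A x := by
    intro x
    rw [hIa, Finset.mem_filter]
    simp
  have memIb : ∀ x : Fin m, x ∈ Ib ↔ ∀ j, j < x → B j ≠ B x := by
    intro x
    rw [hIb, Finset.mem_filter]
    simp
  -- a chain of cycles of length Ia.card in Q
  have hcardA : Ia.card ≤ n := by
    apply hn
    set e := Ia.orderIsoOfFin rfl with he
    refine ⟨fun k => projCycle1 (cs (e k)), ?_, ?_⟩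
    · have main : ∀ k k' : Fin Ia.card, k < k' →
          (projCycle1 (cs (e k))).arrowSet ≠ (projCycle1 (cs (e k'))).arrowSet := by
        intro k k' hkk
        have hlt : (e k : Fin m) < (e k' : Fin m) := e.strictMono hkk
        have hmem := (memIa _).mp (e k').2
        exact fun h => hmem (e k) hlt h
      intro k k' hkk
      rcases lt_or_gt_of_ne hkk with h | h
      · exact main k k' h
      · exact (main k' k h).symm
    · intro i h
      apply reaches_proj1
      apply htrans
      apply e.strictMono
      show (⟨i, _⟩ : Fin Ia.card) < ⟨i + 1, _⟩
      simp [Fin.lt_def]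
  have hcardB : Ib.card ≤ n := by
    apply hn
    set e := Ib.orderIsoOfFin rfl with he
    refine ⟨fun k => projCycle2 (cs (e k)), ?_, ?_⟩
    · have main : ∀ k k' : Fin Ib.card, k < k' →
          (projCycle2 (cs (e k))).arrowSet ≠ (projCycle2 (cs (e k'))).arrowSet := by
        intro k k' hkk
        have hlt : (e k : Fin m) < (e k' : Fin m) := e.strictMono hkk
        have hmem := (memIb _).mp (e k').2
        exact fun h => hmem (e k) hlt h
      intro k k' hkk
      rcases lt_or_gt_of_ne hkk with h | h
      · exact main k k' h
      · exact (main k' k h).symm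
    · intro i h
      apply reaches_proj2
      apply htrans
      apply e.strictMono
      show (⟨i, _⟩ : Fin Ib.card) < ⟨i + 1, _⟩
      simp [Fin.lt_def]
  -- coverage
  have hz : (⟨0, hmpos⟩ : Fin m) ∈ Ia ∩ Ib := by
    rw [Finset.mem_inter]
    constructor
    · exact (memIa _).mpr (fun j hj => absurd hj (by simp [Fin.lt_def]))
    · exact (memIb _).mpr (fun j hj => absurd hj (by simp [Fin.lt_def]))
  have hcover : (Finset.univ : Finset (Fin m)) ⊆ Ia ∪ Ib := by
    intro i _
    rcases Nat.eq_zero_or_pos (i : ℕ) with hi0 | hipos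
    · have : i = ⟨0, hmpos⟩ := Fin.ext hi0
      rw [this]
      exact Finset.mem_union_left _ (Finset.mem_inter.mp hz).1
    · set ip : Fin m := ⟨(i : ℕ) - 1, by omega⟩ with hip
      have hlt : ip < i := by
        rw [Fin.lt_def]
        simp only [hip]
        omega
      rcases not_and_or.mp (hkey ip i hlt) with h | h
      · apply Finset.mem_union_left
        refine (memIa _).mpr (fun j hj hAeq => ?_)
        have hjip : j ≤ ip := by
          rw [Fin.le_def]
          have : (j : ℕ) < (i : ℕ) := hj
          simp only [hip]
          omega
        exact h ((hclosedA j ip i hjip (le_of_lt hlt) hAeq).trans hAeq)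
      · apply Finset.mem_union_right
        refine (memIb _).mpr (fun j hj hBeq => ?_)
        have hjip : j ≤ ip := by
          rw [Fin.le_def]
          have : (j : ℕ) < (i : ℕ) := hj
          simp only [hip]
          omega
        exact h ((hclosedB j ip i hjip (le_of_lt hlt) hBeq).trans hBeq)
  -- count
  have h1 : m ≤ (Ia ∪ Ib).card := by
    have := Finset.card_le_card hcover
    rwa [Finset.card_univ, Fintype.card_fin] at this
  have h2 : (Ia ∪ Ib).card + (Ia ∩ Ib).card = Ia.card + Ib.card :=
    Finset.card_union_add_card_inter Ia Ib
  have h3 : 1 ≤ (Ia ∩ Ib).card := Finset.card_pos.mpr ⟨_, hz⟩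
  omega

end Quiv

namespace Quiv

variable {Q : Quiv}

lemma mem_zip_self {α : Type} (l : List α) (p : α × α) :
    p ∈ l.zip l ↔ p.1 ∈ l ∧ p.2 = p.1 := by
  obtain ⟨x, y⟩ := p
  induction l with
  | nil => simp
  | cons a l ih =>
      rw [List.zip_cons_cons, List.mem_cons, ih]
      simp only [List.mem_cons, Prod.mk.injEq]
      constructor
      · rintro (⟨rfl, rfl⟩ | ⟨h1, h2⟩)
        · exact ⟨Or.inl rfl, rfl⟩
        · exact ⟨Or.inr h1, h2⟩
      · rintro ⟨h1 | h1, h2⟩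
        · subst h1; exact Or.inl ⟨rfl, h2⟩
        · exact Or.inr ⟨h1, h2⟩

lemma arrowSet_nonempty (c : Q.Cycle) : ∃ a, a ∈ c.arrowSet := by
  have hne' : arrowsOf c.2.1 ≠ [] := by
    intro h
    have hpos := c.2.2
    rw [← length_arrowsOf, h] at hpos
    simp at hpos
  obtain ⟨a, l, hl⟩ := List.exists_cons_of_ne_nil hne'
  exact ⟨a, by show a ∈ arrowsOf c.2.1; simp [hl]⟩

/-- The diagonal cycle in the Kronecker square. -/
lemma diag_exists (c : Q.Cycle) : ∃ D : (Q.kron).Cycle,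
    (∀ a : (Q.kron).A, a ∈ D.arrowSet ↔ a.1 ∈ c.arrowSet ∧ a.2 = a.1) ∧
    (∀ v : (Q.kron).V, v ∈ D.vertSet ↔ v.1 ∈ c.vertSet ∧ v.2 = v.1) := by
  obtain ⟨r, hlen, harr, hverts⟩ := zip_exists c.2.1 c.2.1 rfl
  refine ⟨⟨(c.1, c.1), r, by rw [hlen]; exact c.2.2⟩, ?_, ?_⟩
  · intro a
    show a ∈ arrowsOf (Q := Q.kron) r ↔ _
    exact (Iff.of_eq (congrArg (a ∈ ·) harr)).trans (mem_zip_self _ a)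
  · intro v
    show v ∈ vertsOf (Q := Q.kron) r ↔ _
    exact (Iff.of_eq (congrArg (v ∈ ·) hverts)).trans (mem_zip_self _ v)

/-- The mixed cycle in the Kronecker square, connecting two diagonal cycles. -/
lemma mix_exists (c d : Q.Cycle) (hre : c.Reaches d) (Dc Dd : (Q.kron).Cycle)
    (hDc : ∀ v : (Q.kron).V, v ∈ Dc.vertSet ↔ v.1 ∈ c.vertSet ∧ v.2 = v.1)
    (hDd : ∀ v : (Q.kron).V, v ∈ Dd.vertSet ↔ v.1 ∈ d.vertSet ∧ v.2 = v.1) :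
    ∃ M : (Q.kron).Cycle,
      (∀ a : (Q.kron).A, a ∈ M.arrowSet → a.1 ∈ c.arrowSet ∧ a.2 ∈ d.arrowSet) ∧
      (∃ a, a ∈ M.arrowSet) ∧ Dc.Reaches M ∧ M.Reaches Dd := by
  obtain ⟨u, hu, v, hv, ⟨P⟩⟩ := hre
  set T := P.length with hT
  obtain ⟨ρ, hρlen, hρarr, hρverts⟩ := rotate c.2.1 (hu : u ∈ vertsOf c.2.1)
  obtain ⟨ρ', hρ'len, hρ'arr, hρ'verts⟩ := rotate d.2.1 (hv : v ∈ vertsOf d.2.1)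
  have hl : 0 < c.2.1.length := c.2.2
  have hl' : 0 < d.2.1.length := d.2.2
  set pw := pathPow ρ (T + 1) with hpw
  have hpwlen : pw.length = (T + 1) * c.2.1.length := by
    rw [hpw, pathPow_length, hρlen]
  have hTle : T ≤ pw.length := by
    rw [hpwlen]
    calc T ≤ (T + 1) * 1 := by omega
    _ ≤ (T + 1) * c.2.1.length := Nat.mul_le_mul_left _ hl
  obtain ⟨w, Q1, Q2, hQ1len, hsplit⟩ := splitAtLength pw T hTle
  have hQlen : Q1.length + Q2.length = pw.length := by
    have := congrArg List.length hsplit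
    rw [List.length_append, length_arrowsOf, length_arrowsOf, length_arrowsOf] at this
    omega
  set W := Q2.comp Q1 with hW
  have hWlen : W.length = (T + 1) * c.2.1.length := by
    rw [hW, Quiver.Path.length_comp, ← hpwlen]
    omega
  -- arrows of W are arrows of c
  have hWarr : ∀ a ∈ arrowsOf W, a ∈ arrowsOf c.2.1 := by
    intro a ha
    rw [hW, arrowsOf_comp, List.mem_append] at ha
    have : a ∈ arrowsOf pw := by
      rw [hsplit, List.mem_append]
      tauto
    exact (hρarr a).mp (mem_arrowsOf_pathPow this)
  -- the two coordinate paths of M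
  set X1 := pathPow W d.2.1.length with hX1
  set X2 := pathPow ρ' W.length with hX2
  have hX12 : X1.length = X2.length := by
    rw [hX1, hX2, pathPow_length, pathPow_length, hρ'len, Nat.mul_comm]
  obtain ⟨r, hrlen, hrarr, hrverts⟩ := zip_exists X1 X2 hX12
  have hWpos : 0 < W.length := by
    rw [hWlen]
    exact Nat.mul_pos (by omega) hl
  have hrpos : 0 < r.length := by
    rw [hrlen, hX1, pathPow_length]
    exact Nat.mul_pos hl' hWpos
  set M : (Q.kron).Cycle := ⟨(w, v), r, hrpos⟩ with hM
  have hMarr : ∀ a : (Q.kron).A, a ∈ M.arrowSet → a.1 ∈ c.arrowSet ∧ a.2 ∈ d.arrowSet := by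
    intro a ha
    have ha' : a ∈ arrowsOf (Q := Q.kron) r := ha
    rw [hrarr] at ha'
    obtain ⟨a1, a2⟩ := a
    obtain ⟨h1, h2⟩ := List.of_mem_zip ha'
    constructor
    · exact hWarr a1 (mem_arrowsOf_pathPow h1)
    · exact (hρ'arr a2).mp (mem_arrowsOf_pathPow h2)
  refine ⟨M, hMarr, ?_, ?_, ?_⟩
  · have hne : arrowsOf (Q := Q.kron) r ≠ [] := by
      intro h
      have hh := length_arrowsOf (Q := Q.kron) r
      rw [h] at hh
      simp only [List.length_nil] at hh
      omega
    obtain ⟨a, l, hl2⟩ := List.exists_cons_of_ne_nil hne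
    exact ⟨a, by show a ∈ arrowsOf (Q := Q.kron) r; simp [hl2]⟩
  · -- Dc reaches M via zip of Q1 and P
    obtain ⟨r2, -, -, -⟩ := zip_exists Q1 P (by rw [hQ1len])
    refine ⟨(u, u), (hDc (u, u)).mpr ⟨hu, rfl⟩, (w, v), ?_, ⟨r2⟩⟩
    exact start_mem_vertsOf (Q := Q.kron) r
  · -- M reaches Dd
    obtain ⟨aa, haa⟩ : ∃ aa, d.2.1.length = aa + 1 := ⟨d.2.1.length - 1, by omega⟩
    set X := (Q2.comp (pathPow ρ ((T + 1) * aa))).comp P with hX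
    set Y := pathPow ρ' ((T + 1) * c.2.1.length) with hY
    have hXlen : X.length = Y.length := by
      rw [hX, hY]
      simp only [Quiver.Path.length_comp, pathPow_length, hρlen, hρ'len]
      have h1 : Q2.length = (T + 1) * c.2.1.length - T := by omega
      have h2 : T ≤ (T + 1) * c.2.1.length := by
        calc T ≤ (T + 1) * 1 := by omega
        _ ≤ (T + 1) * c.2.1.length := Nat.mul_le_mul_left _ hl
      rw [h1, ← hT, haa]
      have h3 : (T + 1) * aa * c.2.1.length = (T + 1) * c.2.1.length * aa := by ring
      rw [h3]
      have h4 : (T + 1) * c.2.1.length * (aa + 1) =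
          (T + 1) * c.2.1.length * aa + (T + 1) * c.2.1.length := by ring
      omega
    obtain ⟨r3, -, -, -⟩ := zip_exists X Y hXlen
    refine ⟨(w, v), start_mem_vertsOf (Q := Q.kron) r, (v, v), (hDd (v, v)).mpr ⟨hv, rfl⟩, ⟨r3⟩⟩

end Quiv

namespace Quiv

variable {Q : Quiv}

lemma kron_lower (hex : Q.Exclusive) {n : ℕ} (hn : 0 < n) (hc : Q.HasChainOfCycles n) :
    (Q.kron).HasChainOfCycles (2 * n - 1) := by
  classical
  obtain ⟨cs, hdist, hreach⟩ := hc
  have harrdisj : ∀ i j : Fin n, i ≠ j → ∀ a, a ∈ (cs i).arrowSet → a ∉ (cs j).arrowSet := by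
    intro i j hij a hai haj
    have h1 : Q.s a ∈ (cs i).vertSet := s_mem_vertsOf hai
    have h2 : Q.s a ∈ (cs j).vertSet := s_mem_vertsOf haj
    have hd := hex (cs i) (cs j) (hdist i j hij)
    have hmem : Q.s a ∈ (cs i).vertSet ∩ (cs j).vertSet := ⟨h1, h2⟩
    rw [hd] at hmem
    exact hmem
  have hD := fun i : Fin n => diag_exists (cs i)
  choose D hDarr hDvert using hD
  have hM := fun (i : ℕ) (h : i + 1 < n) =>
    mix_exists (cs ⟨i, Nat.lt_of_succ_lt h⟩) (cs ⟨i + 1, h⟩) (hreach i h)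
      (D ⟨i, Nat.lt_of_succ_lt h⟩) (D ⟨i + 1, h⟩) (hDvert _) (hDvert _)
  choose M hMarr hMne hMr1 hMr2 using hM
  set CS : Fin (2 * n - 1) → (Q.kron).Cycle := fun k =>
    if h : (k : ℕ) % 2 = 0 then D ⟨(k : ℕ) / 2, by have := k.isLt; omega⟩
    else M ((k : ℕ) / 2) (by have := k.isLt; omega) with hCS
  have hCSe : ∀ (k : Fin (2 * n - 1)) (h : (k : ℕ) % 2 = 0) (hb : (k : ℕ) / 2 < n),
      CS k = D ⟨(k : ℕ) / 2, hb⟩ := by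
    intro k h hb
    rw [hCS]
    simp only
    rw [dif_pos h]
  have hCSo : ∀ (k : Fin (2 * n - 1)) (h : ¬((k : ℕ) % 2 = 0)) (hb : (k : ℕ) / 2 + 1 < n),
      CS k = M ((k : ℕ) / 2) hb := by
    intro k h hb
    rw [hCS]
    simp only
    rw [dif_neg h]
  refine ⟨CS, ?_, ?_⟩
  · -- pairwise distinct arrow sets
    have main : ∀ k k' : Fin (2 * n - 1), k < k' → (CS k).arrowSet ≠ (CS k').arrowSet := by
      intro k k' hkk heq
      have hkv : (k : ℕ) < (k' : ℕ) := hkk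
      have hk'lt := k'.isLt
      have hklt := k.isLt
      by_cases h1 : (k : ℕ) % 2 = 0 <;> by_cases h2 : (k' : ℕ) % 2 = 0
      · -- both diagonal
        have hb1 : (k : ℕ) / 2 < n := by omega
        have hb2 : (k' : ℕ) / 2 < n := by omega
        rw [hCSe k h1 hb1, hCSe k' h2 hb2] at heq
        obtain ⟨b, hb⟩ := arrowSet_nonempty (cs ⟨(k : ℕ) / 2, hb1⟩)
        have hw1 : ((b, b) : (Q.kron).A) ∈ (D ⟨(k : ℕ) / 2, hb1⟩).arrowSet :=
          (hDarr _ (b, b)).mpr ⟨hb, rfl⟩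
        rw [heq] at hw1
        have hw2 := ((hDarr _ (b, b)).mp hw1).1
        have hne : (⟨(k : ℕ) / 2, hb1⟩ : Fin n) ≠ ⟨(k' : ℕ) / 2, hb2⟩ := by
          intro hh
          rw [Fin.mk.injEq] at hh
          omega
        exact harrdisj _ _ hne b hb hw2
      · -- k diagonal, k' mixed
        have hb2 : (k' : ℕ) / 2 + 1 < n := by omega
        have hb1 : (k : ℕ) / 2 < n := by omega
        rw [hCSe k h1 hb1, hCSo k' h2 hb2] at heq
        obtain ⟨b, hb⟩ := arrowSet_nonempty (cs ⟨(k : ℕ) / 2, hb1⟩)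
        have hw1 : ((b, b) : (Q.kron).A) ∈ (D ⟨(k : ℕ) / 2, hb1⟩).arrowSet :=
          (hDarr _ (b, b)).mpr ⟨hb, rfl⟩
        rw [heq] at hw1
        obtain ⟨hm1, hm2⟩ := hMarr _ hb2 (b, b) hw1
        have hne : (⟨(k' : ℕ) / 2, Nat.lt_of_succ_lt hb2⟩ : Fin n) ≠ ⟨(k' : ℕ) / 2 + 1, hb2⟩ := by
          intro hh
          rw [Fin.mk.injEq] at hh
          omega
        exact harrdisj _ _ hne b hm1 hm2
      · -- k mixed, k' diagonal
        have hb1 : (k : ℕ) / 2 + 1 < n := by omega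
        have hb2 : (k' : ℕ) / 2 < n := by omega
        rw [hCSo k h1 hb1, hCSe k' h2 hb2] at heq
        obtain ⟨b, hb⟩ := arrowSet_nonempty (cs ⟨(k' : ℕ) / 2, hb2⟩)
        have hw1 : ((b, b) : (Q.kron).A) ∈ (D ⟨(k' : ℕ) / 2, hb2⟩).arrowSet :=
          (hDarr _ (b, b)).mpr ⟨hb, rfl⟩
        rw [← heq] at hw1
        obtain ⟨hm1, hm2⟩ := hMarr _ hb1 (b, b) hw1
        have hne : (⟨(k : ℕ) / 2, Nat.lt_of_succ_lt hb1⟩ : Fin n) ≠ ⟨(k : ℕ) / 2 + 1, hb1⟩ := by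
          intro hh
          rw [Fin.mk.injEq] at hh
          omega
        exact harrdisj _ _ hne b hm1 hm2
      · -- both mixed
        have hb1 : (k : ℕ) / 2 + 1 < n := by omega
        have hb2 : (k' : ℕ) / 2 + 1 < n := by omega
        rw [hCSo k h1 hb1, hCSo k' h2 hb2] at heq
        obtain ⟨a, ha⟩ := hMne _ hb1
        have ha' := ha
        rw [heq] at ha'
        have hm1 := (hMarr _ hb1 a ha).1
        have hm2 := (hMarr _ hb2 a ha').1
        have hne : (⟨(k : ℕ) / 2, Nat.lt_of_succ_lt hb1⟩ : Fin n) ≠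
            ⟨(k' : ℕ) / 2, Nat.lt_of_succ_lt hb2⟩ := by
          intro hh
          rw [Fin.mk.injEq] at hh
          omega
        exact harrdisj _ _ hne a.1 hm1 hm2
    intro k k' hkk
    rcases lt_or_gt_of_ne hkk with h | h
    · exact main k k' h
    · exact fun hh => (main k' k h) hh.symm
  · -- consecutive reachability
    intro i h
    by_cases hpar : i % 2 = 0
    · have hb1 : i / 2 < n := by omega
      have hb2 : (i + 1) / 2 + 1 < n := by omega
      have hpar2 : ¬((i + 1) % 2 = 0) := by omega
      rw [hCSe ⟨i, Nat.lt_of_succ_lt h⟩ hpar hb1, hCSo ⟨i + 1, h⟩ hpar2 hb2]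
      have hidx : (i + 1) / 2 = i / 2 := by omega
      have hb2' : i / 2 + 1 < n := by omega
      have := hMr1 (i / 2) hb2'
      convert this using 2 <;> exact Fin.ext (by simp only [Fin.val_mk]; omega)
    · have hb1 : i / 2 + 1 < n := by omega
      have hb2 : (i + 1) / 2 < n := by omega
      have hpar2 : (i + 1) % 2 = 0 := by omega
      rw [hCSo ⟨i, Nat.lt_of_succ_lt h⟩ hpar hb1, hCSe ⟨i + 1, h⟩ hpar2 hb2]
      have := hMr2 (i / 2) hb1
      convert this using 2 <;> exact Fin.ext (by simp only [Fin.val_mk]; omega)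

end Quiv

/-- If a finite quiver `Q` satisfies the exclusive condition and the maximal length of a chain
of cycles in `Q` is `n`, then the maximal length of a chain of cycles in the Kronecker square
`Q̂` is `2n - 1`. -/
theorem stmt17 (Q : Quiv) [Finite Q.V] [Finite Q.A] (n : ℕ)
    (hex : Q.Exclusive) (hmax : IsGreatest {m | Q.HasChainOfCycles m} n) :
    IsGreatest {m | Q.kron.HasChainOfCycles m} (2 * n - 1) := by
  constructor
  · show Q.kron.HasChainOfCycles (2 * n - 1)
    rcases Nat.eq_zero_or_pos n with h0 | hpos
    · subst h0
      show Q.kron.HasChainOfCycles 0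
      exact ⟨fun k => k.elim0, fun i => i.elim0, fun i h => absurd h (by omega)⟩
    · exact Quiv.kron_lower hex hpos hmax.1
  · intro m hm
    exact Quiv.kron_upper hex n (fun k hk => hmax.2 hk) m hm
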